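/- Let f(t) = 2^{-t}·ln Γ(t). Then ∫₀^∞ f(t) dt = 2·∫₀¹ f(t) dt - (γ + ln ln 2)/ln 2. -/

import Mathlib

open Real MeasureTheory Set

/-- ∫₀^∞ e^{-t} log t dt = -γ. -/
lemma integral_exp_neg_log : ∫ t in Ioi (0:ℝ), Real.exp (-t) * Real.log t
    = -Real.eulerMascheroniConstant := by
  have h1 := Complex.hasDerivAt_GammaIntegral (s := 1) (by simp)
  have h2 : HasDerivAt Complex.Gamma
      (∫ t : ℝ in Ioi 0, (t:ℂ) ^ ((1:ℂ) - 1) * (Real.log t * Real.exp (-t))) 1 := by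
    refine h1.congr_of_eventuallyEq ?_
    filter_upwards [(Complex.continuous_re.tendsto _).eventually
      (eventually_gt_nhds (by norm_num : (0:ℝ) < (1:ℂ).re))] with s hs
    exact Complex.Gamma_eq_integral hs
  have h3 := h2.real_of_complex
  have h4 : HasDerivAt Real.Gamma
      ((∫ t : ℝ in Ioi 0, (t:ℂ) ^ ((1:ℂ) - 1) * (Real.log t * Real.exp (-t))).re) 1 := by
    refine h3.congr_of_eventuallyEq ?_
    filter_upwards with x
    rw [Complex.Gamma_ofReal, Complex.ofReal_re]
  have h5 := h4.unique Real.hasDerivAt_Gamma_one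
  rw [← h5]
  have : (∫ t : ℝ in Ioi 0, (t:ℂ) ^ ((1:ℂ) - 1) * (Real.log t * Real.exp (-t)))
      = ((∫ t : ℝ in Ioi 0, Real.exp (-t) * Real.log t : ℝ) : ℂ) := by
    rw [show ((∫ t : ℝ in Ioi 0, Real.exp (-t) * Real.log t : ℝ) : ℂ)
        = ∫ t : ℝ in Ioi 0, ((Real.exp (-t) * Real.log t : ℝ) : ℂ) from (integral_ofReal).symm]
    refine setIntegral_congr_fun measurableSet_Ioi (fun t ht => ?_)
    push_cast
    rw [sub_self, Complex.cpow_zero, one_mul, mul_comm]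
  rw [this, Complex.ofReal_re]

/-- Integrability of e^{-t} log t on (0,∞). -/
lemma integrableOn_exp_neg_mul_log :
    IntegrableOn (fun t => Real.exp (-t) * Real.log t) (Ioi (0:ℝ)) := by
  have hmeas : AEStronglyMeasurable (fun t => Real.exp (-t) * Real.log t)
      (volume.restrict (Ioi (0:ℝ))) :=
    ((Real.measurable_exp.comp measurable_neg).mul Real.measurable_log).aestronglyMeasurable
  rw [← Ioc_union_Ioi_eq_Ioi (by norm_num : (0:ℝ) ≤ 1)]
  refine IntegrableOn.union ?_ ?_
  · -- on (0,1] : dominated by 2 * t ^ (-1/2)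
    refine Integrable.mono' (g := fun t => 2 * t ^ (-(1/2) : ℝ)) ?_
      (hmeas.mono_set (Ioc_subset_Ioi_self)) ?_
    · have : IntervalIntegrable (fun t : ℝ => t ^ (-(1/2) : ℝ)) volume 0 1 :=
        intervalIntegral.intervalIntegrable_rpow' (by norm_num)
      have := (this.const_mul 2)
      rwa [intervalIntegrable_iff_integrableOn_Ioc_of_le (by norm_num)] at this
    · filter_upwards [ae_restrict_mem measurableSet_Ioc] with t ht
      have ht0 : 0 < t := ht.1
      rw [norm_mul, Real.norm_eq_abs, Real.norm_eq_abs, abs_of_pos (exp_pos _)]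
      have h1 : |Real.log t| = -Real.log t := by
        rw [abs_of_nonpos (Real.log_nonpos ht0.le ht.2)]
      rw [h1]
      have h2 : -Real.log t = 2 * Real.log (t ^ (-(1/2) : ℝ)) := by
        rw [Real.log_rpow ht0]; ring
      have h3 : Real.log (t ^ (-(1/2) : ℝ)) ≤ t ^ (-(1/2) : ℝ) :=
        Real.log_le_self (Real.rpow_nonneg ht0.le _)
      have h4 : Real.exp (-t) ≤ 1 := Real.exp_le_one_iff.mpr (by linarith)
      calc Real.exp (-t) * (-Real.log t) ≤ 1 * (-Real.log t) :=
            mul_le_mul_of_nonneg_right h4 (neg_nonneg.mpr (Real.log_nonpos ht0.le ht.2))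
        _ = -Real.log t := one_mul _
        _ ≤ 2 * t ^ (-(1/2) : ℝ) := by rw [h2]; linarith
  · -- on (1,∞) : dominated by exp(-t) * t
    refine Integrable.mono' (g := fun t => Real.exp (-t) * t ^ (2 - 1 : ℝ)) ?_
      (hmeas.mono_set (Ioi_subset_Ioi (by norm_num))) ?_
    · exact (Real.GammaIntegral_convergent (by norm_num : (0:ℝ) < 2)).mono_set
        (Ioi_subset_Ioi (by norm_num))
    · filter_upwards [ae_restrict_mem measurableSet_Ioi] with t ht
      have ht1 : (1:ℝ) ≤ t := (mem_Ioi.mp ht).le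
      have ht0 : 0 < t := lt_of_lt_of_le one_pos ht1
      rw [norm_mul, Real.norm_eq_abs, Real.norm_eq_abs, abs_of_pos (exp_pos _),
        abs_of_nonneg (Real.log_nonneg ht1), show (2 - 1 : ℝ) = 1 by norm_num,
        Real.rpow_one]
      exact mul_le_mul_of_nonneg_left ((Real.log_le_sub_one_of_pos ht0).trans
        (by linarith)) (exp_pos _).le

lemma integrableOn_exp_neg_Ioi_zero' : IntegrableOn (fun x => Real.exp (-x)) (Ioi (0:ℝ)) := by
  have h := exp_neg_integrableOn_Ioi 0 zero_lt_one
  exact h.congr_fun (fun x _ => by dsimp only; rw [neg_mul, one_mul]) measurableSet_Ioi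

/-- Integrability of 2^{-t} log t = e^{-(log 2) t} log t on (0,∞). -/
lemma integrableOn_two_exp_neg_mul_log :
    IntegrableOn (fun t => Real.exp (-(Real.log 2 * t)) * Real.log t) (Ioi (0:ℝ)) := by
  have hL : (0:ℝ) < Real.log 2 := Real.log_pos one_lt_two
  have hg : IntegrableOn (fun u => Real.exp (-u) * Real.log u
      - Real.log (Real.log 2) * Real.exp (-u)) (Ioi ((Real.log 2) * 0)) := by
    rw [mul_zero]
    exact integrableOn_exp_neg_mul_log.sub (integrableOn_exp_neg_Ioi_zero'.const_mul _)
  have h2 := (integrableOn_Ioi_comp_mul_left_iff (fun u => Real.exp (-u) * Real.log u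
      - Real.log (Real.log 2) * Real.exp (-u)) 0 hL).mpr hg
  refine h2.congr_fun (fun t ht => ?_) measurableSet_Ioi
  have ht0 : (0:ℝ) < t := ht
  dsimp only
  rw [Real.log_mul hL.ne' ht0.ne']
  ring

/-- Value of ∫₀^∞ 2^{-t} log t dt. -/
lemma integral_two_exp_neg_mul_log :
    ∫ t in Ioi (0:ℝ), Real.exp (-(Real.log 2 * t)) * Real.log t
      = -((Real.eulerMascheroniConstant + Real.log (Real.log 2)) / Real.log 2) := by
  have hL : (0:ℝ) < Real.log 2 := Real.log_pos one_lt_two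
  have key : ∫ t in Ioi (0:ℝ), Real.exp (-(Real.log 2 * t)) * Real.log t
      = ∫ t in Ioi (0:ℝ), (fun u => Real.exp (-u) * Real.log u
        - Real.log (Real.log 2) * Real.exp (-u)) (Real.log 2 * t) := by
    refine setIntegral_congr_fun measurableSet_Ioi (fun t ht => ?_)
    have ht0 : (0:ℝ) < t := ht
    simp only
    rw [Real.log_mul hL.ne' ht0.ne']
    ring
  have h2 := integral_comp_mul_left_Ioi (fun u => Real.exp (-u) * Real.log u
      - Real.log (Real.log 2) * Real.exp (-u)) 0 hL
  rw [mul_zero] at h2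
  rw [key, h2]
  simp only [smul_eq_mul]
  rw [integral_sub integrableOn_exp_neg_mul_log (integrableOn_exp_neg_Ioi_zero'.const_mul _),
    integral_exp_neg_log, integral_const_mul, integral_exp_neg_Ioi_zero]
  field_simp
  ring


/-- Integrability of 2^{-t} log Γ(t+1) on (0,∞). -/
lemma integrableOn_F1 :
    IntegrableOn (fun t => Real.exp (-(Real.log 2 * t)) * Real.log (Real.Gamma (t+1)))
      (Ioi (0:ℝ)) := by
  have hL : (0:ℝ) < Real.log 2 := Real.log_pos one_lt_two
  have hcont : ∀ s : Set ℝ, (∀ t ∈ s, (0:ℝ) < t + 1) →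
      ContinuousOn (fun t => Real.exp (-(Real.log 2 * t)) * Real.log (Real.Gamma (t+1))) s := by
    intro s hs
    apply ContinuousOn.mul
    · exact (Real.continuous_exp.comp (continuous_const.mul continuous_id).neg).continuousOn
    · apply ContinuousOn.log
      · intro t ht
        have h1 : ∀ m : ℕ, t + 1 ≠ -m := by
          intro m
          have : (0:ℝ) ≤ m := m.cast_nonneg
          have := hs t ht
          intro h; rw [h] at this; linarith
        have h2 : ContinuousAt Real.Gamma (t + 1) :=
          (Real.differentiableAt_Gamma h1).continuousAt
        have h3 : ContinuousAt (fun x : ℝ => x + 1) t := by fun_prop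
        exact (ContinuousAt.comp (f := fun x : ℝ => x + 1) h2 h3).continuousWithinAt
      · exact fun t ht => (Real.Gamma_pos_of_pos (hs t ht)).ne'
  rw [← Ioc_union_Ioi_eq_Ioi (by norm_num : (0:ℝ) ≤ 1)]
  refine IntegrableOn.union ?_ ?_
  · refine ((hcont (Icc 0 1) (fun t ht => by linarith [ht.1])).integrableOn_Icc).mono_set
      Ioc_subset_Icc_self
  · refine Integrable.mono'
      (g := fun t => 4 * (t ^ (2:ℝ) * Real.exp (-Real.log 2 * t ^ (1:ℝ)))) ?_ ?_ ?_
    · exact ((integrableOn_rpow_mul_exp_neg_mul_rpow (by norm_num : (-1:ℝ) < 2) zero_lt_one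
        hL).mono_set (Ioi_subset_Ioi zero_le_one)).const_mul 4
    · exact ((hcont (Ioi 1) (fun t ht => by simp only [mem_Ioi] at ht; linarith)).mono
        (by norm_num)).aestronglyMeasurable measurableSet_Ioi
    · filter_upwards [ae_restrict_mem measurableSet_Ioi] with t ht
      simp only [mem_Ioi] at ht
      have ht0 : (0:ℝ) < t := lt_trans one_pos ht
      have hmono := Real.Gamma_strictMonoOn_Ici.monotoneOn
      -- 1 ≤ Γ (t+1)
      have hG1 : 1 ≤ Real.Gamma (t + 1) := by
        have := hmono self_mem_Ici (mem_Ici.mpr (by linarith : (2:ℝ) ≤ t + 1))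
          (by linarith : (2:ℝ) ≤ t + 1)
        rwa [Real.Gamma_two] at this
      -- upper bound
      set n := ⌈t⌉₊ with hn
      have hn1 : t ≤ n := Nat.le_ceil t
      have hn2 : (n:ℝ) ≤ t + 1 := by
        have := Nat.ceil_lt_add_one ht0.le
        exact le_of_lt this
      have hG2 : Real.Gamma (t + 1) ≤ Real.Gamma (n + 1) := by
        refine hmono (mem_Ici.mpr (by linarith)) (mem_Ici.mpr (by linarith)) (by linarith)
      have hG3 : Real.Gamma ((n:ℝ) + 1) = (Nat.factorial n : ℝ) := Real.Gamma_nat_eq_factorial n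
      have hG4 : (Nat.factorial n : ℝ) ≤ ((t+1):ℝ) ^ (n:ℕ) := by
        calc (Nat.factorial n : ℝ) ≤ ((n:ℝ)) ^ (n:ℕ) := by exact_mod_cast Nat.factorial_le_pow n
          _ ≤ (t+1) ^ (n:ℕ) := pow_le_pow_left₀ n.cast_nonneg hn2 n
      have hlog : Real.log (Real.Gamma (t+1)) ≤ (t+1) * Real.log (t+1) := by
        have h5 : Real.log (Real.Gamma (t+1)) ≤ Real.log ((t+1) ^ (n:ℕ)) :=
          Real.log_le_log (by linarith) (by rw [← hG3] at hG4; linarith [hG2.trans hG4])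
        rw [Real.log_pow] at h5
        refine h5.trans ?_
        exact mul_le_mul_of_nonneg_right hn2 (Real.log_nonneg (by linarith))
      have hlogG_nonneg : 0 ≤ Real.log (Real.Gamma (t+1)) := Real.log_nonneg hG1
      rw [Real.norm_eq_abs, abs_of_nonneg (mul_nonneg (exp_pos _).le hlogG_nonneg)]
      have hlog2 : Real.log (t+1) ≤ 2 * t := by
        have := Real.log_le_sub_one_of_pos (by linarith : (0:ℝ) < t + 1)
        linarith
      have hbound : Real.log (Real.Gamma (t+1)) ≤ 4 * t ^ (2:ℝ) := by
        have h6 : (t+1) * Real.log (t+1) ≤ (2*t) * (2*t) := by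
          apply mul_le_mul (by linarith) hlog2 (Real.log_nonneg (by linarith)) (by linarith)
        have h7 : t ^ (2:ℝ) = t * t := by
          rw [show (2:ℝ) = ((2:ℕ):ℝ) by norm_num, Real.rpow_natCast]; ring
        rw [h7]; nlinarith
      calc Real.exp (-(Real.log 2 * t)) * Real.log (Real.Gamma (t+1))
          ≤ Real.exp (-(Real.log 2 * t)) * (4 * t ^ (2:ℝ)) :=
            mul_le_mul_of_nonneg_left hbound (exp_pos _).le
        _ = 4 * (t ^ (2:ℝ) * Real.exp (-Real.log 2 * t ^ (1:ℝ))) := by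
            rw [Real.rpow_one, neg_mul]; ring

theorem espinosa_identity_one :
    ∫ t in Set.Ioi (0:ℝ), (2:ℝ) ^ (-t) * Real.log (Real.Gamma t)
      = 2 * (∫ t in (0:ℝ)..1, (2:ℝ) ^ (-t) * Real.log (Real.Gamma t))
        - (Real.eulerMascheroniConstant + Real.log (Real.log 2)) / Real.log 2 := by
  have hL : (0:ℝ) < Real.log 2 := Real.log_pos one_lt_two
  have hpow : ∀ t : ℝ, (2:ℝ) ^ (-t) = Real.exp (-(Real.log 2 * t)) := by
    intro t
    rw [Real.rpow_def_of_pos two_pos, mul_neg]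
  set F : ℝ → ℝ := fun t => Real.exp (-(Real.log 2 * t)) * Real.log (Real.Gamma t) with hF
  set F2 : ℝ → ℝ := fun t => Real.exp (-(Real.log 2 * t)) * Real.log t with hF2
  -- integrability of F
  have hFeq : ∀ t ∈ Ioi (0:ℝ), (fun t => Real.exp (-(Real.log 2 * t)) *
      Real.log (Real.Gamma (t+1)) - F2 t) t = F t := by
    intro t ht
    have ht0 : (0:ℝ) < t := ht
    simp only [hF, hF2]
    rw [Real.Gamma_add_one ht0.ne', Real.log_mul ht0.ne' (Real.Gamma_pos_of_pos ht0).ne']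
    ring
  have intF : IntegrableOn F (Ioi (0:ℝ)) := by
    refine IntegrableOn.congr_fun (integrableOn_F1.sub integrableOn_two_exp_neg_mul_log)
      (fun t ht => ?_) measurableSet_Ioi
    simp only [Pi.sub_apply]
    exact hFeq t ht
  have intF2 : IntegrableOn F2 (Ioi (0:ℝ)) := integrableOn_two_exp_neg_mul_log
  -- split the integral
  have hsplit : ∫ t in Ioi (0:ℝ), F t
      = (∫ t in Ioc (0:ℝ) 1, F t) + ∫ t in Ioi (1:ℝ), F t := by
    rw [← Ioc_union_Ioi_eq_Ioi (by norm_num : (0:ℝ) ≤ 1)] at intF ⊢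
    exact setIntegral_union (Ioc_disjoint_Ioi le_rfl) measurableSet_Ioi
      (intF.mono_set subset_union_left) (intF.mono_set subset_union_right)
  -- shift the tail integral
  have hshift : ∫ t in Ioi (1:ℝ), F t = ∫ t in Ioi (0:ℝ), F (t + 1) := by
    have h := (measurePreserving_add_right volume (1:ℝ)).setIntegral_preimage_emb
      (Homeomorph.measurableEmbedding (Homeomorph.addRight (1:ℝ))) F (Ioi 1)
    rw [show (fun x => x + (1:ℝ)) ⁻¹' Ioi 1 = Ioi 0 by
      rw [preimage_add_const_Ioi]; norm_num] at h
    exact h.symm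
  -- rewrite shifted integrand
  have hFshift : ∀ t ∈ Ioi (0:ℝ), F (t + 1) = (1/2) * F t + (1/2) * F2 t := by
    intro t ht
    have ht0 : (0:ℝ) < t := ht
    simp only [hF, hF2]
    have hE : Real.exp (-(Real.log 2 * (t+1))) = (1/2) * Real.exp (-(Real.log 2 * t)) := by
      rw [mul_add, neg_add, Real.exp_add, mul_one, Real.exp_neg (Real.log 2), Real.exp_log two_pos]
      ring
    rw [Real.Gamma_add_one ht0.ne', Real.log_mul ht0.ne' (Real.Gamma_pos_of_pos ht0).ne', hE]
    ring
  have htail : ∫ t in Ioi (1:ℝ), F t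
      = (1/2) * (∫ t in Ioi (0:ℝ), F t) + (1/2) * ∫ t in Ioi (0:ℝ), F2 t := by
    rw [hshift, setIntegral_congr_fun measurableSet_Ioi hFshift,
      integral_add (intF.const_mul _) (intF2.const_mul _),
      integral_const_mul, integral_const_mul]
  have hJ : ∫ t in Ioi (0:ℝ), F2 t
      = -((Real.eulerMascheroniConstant + Real.log (Real.log 2)) / Real.log 2) :=
    integral_two_exp_neg_mul_log
  -- rewrite goal
  have hgoal1 : ∫ t in Set.Ioi (0:ℝ), (2:ℝ) ^ (-t) * Real.log (Real.Gamma t)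
      = ∫ t in Ioi (0:ℝ), F t := by
    refine setIntegral_congr_fun measurableSet_Ioi (fun t _ => ?_)
    simp only [hF]; rw [hpow]
  have hgoal2 : (∫ t in (0:ℝ)..1, (2:ℝ) ^ (-t) * Real.log (Real.Gamma t))
      = ∫ t in Ioc (0:ℝ) 1, F t := by
    rw [intervalIntegral.integral_of_le (by norm_num : (0:ℝ) ≤ 1)]
    refine setIntegral_congr_fun measurableSet_Ioc (fun t _ => ?_)
    simp only [hF]; rw [hpow]
  rw [hgoal1, hgoal2]
  have := hsplit
  rw [htail, hJ] at this
  linarith
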